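/- Fix real numbers t0 < t1 and 0 ≤ x_min < x_max. Let ψ : [t0,t1] × [x_min,x_max] → ℝ be C¹ and satisfy ∂_t ψ(t,x) + ∂_x ψ(t,x) = 0 for all (t,x), with boundary values ψ(t, x_min) = u(t) and ψ(t, x_max) = 0 for all t ∈ [t0,t1]. Define y(t) = ∫_{x_min}^{x_max} x³ ψ(t,x) dx. Then y is differentiable on [t0,t1] and y′(t) = 3 ∫_{x_min}^{x_max} x² ψ(t,x) dx + x_min³ u(t) for all t ∈ [t0,t1]. -/

import Mathlib

set_option autoImplicit false
set_option maxHeartbeats 1000000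

open Set MeasureTheory intervalIntegral

/-- First derivative identity for the third-moment output of the unit-speed transport
equation `∂ₜψ + ∂ₓψ = 0` with `ψ(t, xmax) = 0`:
`y'(t) = 3 ∫ x² ψ(t,x) dx + xmin³ u(t)` where `u(t) = ψ(t, xmin)`. -/
theorem stmt5 (t0 t1 xmin xmax : ℝ) (ht : t0 < t1) (hx0 : 0 ≤ xmin) (hx : xmin < xmax)
    (ψ : ℝ → ℝ → ℝ) (u : ℝ → ℝ)
    (hC : ContDiffOn ℝ 1 (fun p : ℝ × ℝ => ψ p.1 p.2) (Set.Icc t0 t1 ×ˢ Set.Icc xmin xmax))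
    (hPDE : ∀ t ∈ Set.Icc t0 t1, ∀ x ∈ Set.Icc xmin xmax,
      derivWithin (fun s => ψ s x) (Set.Icc t0 t1) t
        + derivWithin (fun ξ => ψ t ξ) (Set.Icc xmin xmax) x = 0)
    (hbmin : ∀ t ∈ Set.Icc t0 t1, ψ t xmin = u t)
    (hbmax : ∀ t ∈ Set.Icc t0 t1, ψ t xmax = 0) :
    ∀ t ∈ Set.Icc t0 t1,
      HasDerivWithinAt (fun s => ∫ x in xmin..xmax, x ^ 3 * ψ s x)
        ((3 * ∫ x in xmin..xmax, x ^ 2 * ψ t x) + xmin ^ 3 * u t)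
        (Set.Icc t0 t1) t := by
  intro t htmem
  set S : Set (ℝ × ℝ) := Set.Icc t0 t1 ×ˢ Set.Icc xmin xmax with hS
  set Ψ : ℝ × ℝ → ℝ := fun p => ψ p.1 p.2 with hΨ
  set D : ℝ × ℝ → ℝ × ℝ →L[ℝ] ℝ := fderivWithin ℝ Ψ S with hD
  have hU : UniqueDiffOn ℝ S := (uniqueDiffOn_Icc ht).prod (uniqueDiffOn_Icc hx)
  -- projection onto S
  set π : ℝ × ℝ → ℝ × ℝ :=
    fun p => (projIcc t0 t1 ht.le p.1, projIcc xmin xmax hx.le p.2) with hπ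
  have hπcont : Continuous π := by
    exact ((continuous_subtype_val.comp continuous_projIcc).comp continuous_fst).prodMk
      ((continuous_subtype_val.comp continuous_projIcc).comp continuous_snd)
  have hπmem : ∀ p, π p ∈ S := fun p => ⟨(projIcc t0 t1 ht.le p.1).2, (projIcc xmin xmax hx.le p.2).2⟩
  have hπid : ∀ p ∈ S, π p = p := by
    rintro ⟨a, b⟩ ⟨ha, hb⟩
    simp [hπ, projIcc_of_mem, ha, hb]
  -- continuity of the derivative
  have hDcont : ContinuousOn D S := hC.continuousOn_fderivWithin hU le_rfl
  set Fe : ℝ → ℝ → ℝ := fun τ x => D (π (τ, x)) (1, 0) with hFe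
  set Ge : ℝ → ℝ → ℝ := fun τ x => D (π (τ, x)) (0, 1) with hGe
  have hDπ : Continuous fun p => D (π p) :=
    hDcont.comp_continuous hπcont hπmem
  have hFecont : Continuous fun p : ℝ × ℝ => Fe p.1 p.2 := by
    exact (hDπ.clm_apply continuous_const)
  have hGecont : Continuous fun p : ℝ × ℝ => Ge p.1 p.2 := by
    exact (hDπ.clm_apply continuous_const)
  -- slice derivatives
  have hslice_t : ∀ s ∈ Set.Icc t0 t1, ∀ x ∈ Set.Icc xmin xmax,
      HasDerivWithinAt (fun τ => ψ τ x) (D (s, x) (1, 0)) (Set.Icc t0 t1) s := by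
    intro s hs x hxm
    have hmem : (s, x) ∈ S := ⟨hs, hxm⟩
    have hdiff : HasFDerivWithinAt Ψ (D (s, x)) S (s, x) :=
      ((hC.differentiableOn one_ne_zero) (s, x) hmem).hasFDerivWithinAt
    have hι : HasDerivWithinAt (fun τ : ℝ => (τ, x)) ((1 : ℝ), (0 : ℝ)) (Set.Icc t0 t1) s :=
      ((hasDerivAt_id s).prodMk (hasDerivAt_const s x)).hasDerivWithinAt
    exact hdiff.comp_hasDerivWithinAt s hι (fun τ hτ => (⟨hτ, hxm⟩ : (τ, x) ∈ S))
  have hslice_x : ∀ s ∈ Set.Icc t0 t1, ∀ x ∈ Set.Icc xmin xmax,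
      HasDerivWithinAt (fun ξ => ψ s ξ) (D (s, x) (0, 1)) (Set.Icc xmin xmax) x := by
    intro s hs x hxm
    have hmem : (s, x) ∈ S := ⟨hs, hxm⟩
    have hdiff : HasFDerivWithinAt Ψ (D (s, x)) S (s, x) :=
      ((hC.differentiableOn one_ne_zero) (s, x) hmem).hasFDerivWithinAt
    have hι : HasDerivWithinAt (fun ξ : ℝ => (s, ξ)) ((0 : ℝ), (1 : ℝ)) (Set.Icc xmin xmax) x :=
      ((hasDerivAt_const x s).prodMk (hasDerivAt_id x)).hasDerivWithinAt
    exact hdiff.comp_hasDerivWithinAt x hι (fun ξ hξ => ⟨hs, hξ⟩)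
  have hFeS : ∀ s ∈ Set.Icc t0 t1, ∀ x ∈ Set.Icc xmin xmax, Fe s x = D (s, x) (1, 0) := by
    intro s hs x hxm; simp only [hFe]; rw [hπid (s, x) ⟨hs, hxm⟩]
  have hGeS : ∀ s ∈ Set.Icc t0 t1, ∀ x ∈ Set.Icc xmin xmax, Ge s x = D (s, x) (0, 1) := by
    intro s hs x hxm; simp only [hGe]; rw [hπid (s, x) ⟨hs, hxm⟩]
  -- PDE in terms of D
  have hPDE' : ∀ s ∈ Set.Icc t0 t1, ∀ x ∈ Set.Icc xmin xmax,
      Fe s x = -Ge s x := by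
    intro s hs x hxm
    have h1 : derivWithin (fun τ => ψ τ x) (Set.Icc t0 t1) s = D (s, x) (1, 0) :=
      (hslice_t s hs x hxm).derivWithin (uniqueDiffOn_Icc ht s hs)
    have h2 : derivWithin (fun ξ => ψ s ξ) (Set.Icc xmin xmax) x = D (s, x) (0, 1) :=
      (hslice_x s hs x hxm).derivWithin (uniqueDiffOn_Icc hx x hxm)
    have := hPDE s hs x hxm
    rw [h1, h2] at this
    rw [hFeS s hs x hxm, hGeS s hs x hxm]
    linarith
  -- continuity of ψ on slices
  have hΨcont : ContinuousOn Ψ S := hC.continuousOn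
  have hcont_t : ∀ x ∈ Set.Icc xmin xmax,
      ContinuousOn (fun τ => ψ τ x) (Set.Icc t0 t1) := by
    intro x hxm
    exact hΨcont.comp (continuous_id.prodMk continuous_const).continuousOn
      (fun τ hτ => ⟨hτ, hxm⟩)
  have hcont_x : ∀ s ∈ Set.Icc t0 t1,
      ContinuousOn (fun ξ => ψ s ξ) (Set.Icc xmin xmax) := by
    intro s hs
    exact hΨcont.comp (continuous_const.prodMk continuous_id).continuousOn
      (fun ξ hξ => ⟨hs, hξ⟩)
  -- FTC in time
  have hFTCt : ∀ s ∈ Set.Icc t0 t1, ∀ x ∈ Set.Icc xmin xmax,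
      ∫ τ in t0..s, Fe τ x = ψ s x - ψ t0 x := by
    intro s hs x hxm
    apply integral_eq_sub_of_hasDeriv_right_of_le hs.1
    · exact (hcont_t x hxm).mono (Set.Icc_subset_Icc le_rfl hs.2)
    · intro τ hτ
      have hτS : τ ∈ Set.Icc t0 t1 := ⟨hτ.1.le, hτ.2.le.trans hs.2⟩
      have := hslice_t τ hτS x hxm
      rw [← hFeS τ hτS x hxm] at this
      apply this.mono_of_mem_nhdsWithin
      exact Filter.mem_of_superset (Ioc_mem_nhdsGT_of_mem ⟨le_refl τ, hτ.2.trans_le hs.2⟩)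
        (fun z hz => ⟨hτ.1.le.trans hz.1.le, hz.2⟩)
    · exact ((hFecont.comp (continuous_id.prodMk continuous_const)).intervalIntegrable t0 s)
  -- the candidate derivative function
  set h : ℝ → ℝ := fun τ => ∫ x in xmin..xmax, x ^ 3 * Fe τ x with hh
  have hhcont : Continuous h := by
    apply continuous_parametric_intervalIntegral_of_continuous'
    exact (continuous_snd.pow 3).mul hFecont
  -- Fubini: y s - y t0 = ∫_{t0}^s h
  have hkey : ∀ s ∈ Set.Icc t0 t1,
      (∫ x in xmin..xmax, x ^ 3 * ψ s x)
        = (∫ x in xmin..xmax, x ^ 3 * ψ t0 x) + ∫ τ in t0..s, h τ := by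
    intro s hs
    have hswap : (∫ x in xmin..xmax, ∫ τ in t0..s, x ^ 3 * Fe τ x)
        = ∫ τ in t0..s, ∫ x in xmin..xmax, x ^ 3 * Fe τ x := by
      rw [intervalIntegral.integral_of_le hx.le, intervalIntegral.integral_of_le hs.1]
      simp_rw [intervalIntegral.integral_of_le hx.le, intervalIntegral.integral_of_le hs.1]
      have hint : Integrable (Function.uncurry fun x τ => x ^ 3 * Fe τ x)
          ((volume.restrict (Set.Ioc xmin xmax)).prod (volume.restrict (Set.Ioc t0 s))) := by
        rw [Measure.prod_restrict]
        have hcont : Continuous (Function.uncurry fun x τ => x ^ 3 * Fe τ x) := by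
          exact (continuous_fst.pow 3).mul (hFecont.comp (continuous_snd.prodMk continuous_fst))
        apply (hcont.continuousOn.integrableOn_compact (isCompact_Icc.prod isCompact_Icc)).mono_set
        exact Set.prod_mono Set.Ioc_subset_Icc_self Set.Ioc_subset_Icc_self
      exact MeasureTheory.integral_integral_swap hint
    calc (∫ x in xmin..xmax, x ^ 3 * ψ s x)
        = ∫ x in xmin..xmax, (x ^ 3 * ψ t0 x + ∫ τ in t0..s, x ^ 3 * Fe τ x) := by
          apply intervalIntegral.integral_congr
          intro x hxm
          rw [Set.uIcc_of_le hx.le] at hxm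
          show x ^ 3 * ψ s x = x ^ 3 * ψ t0 x + ∫ τ in t0..s, x ^ 3 * Fe τ x
          rw [intervalIntegral.integral_const_mul, hFTCt s hs x hxm]
          ring
      _ = (∫ x in xmin..xmax, x ^ 3 * ψ t0 x) + ∫ x in xmin..xmax, ∫ τ in t0..s, x ^ 3 * Fe τ x := by
          apply intervalIntegral.integral_add
          · apply ContinuousOn.intervalIntegrable
            rw [Set.uIcc_of_le hx.le]
            exact (continuous_id.pow 3).continuousOn.mul
              (hcont_x t0 (Set.left_mem_Icc.2 ht.le))
          · apply ContinuousOn.intervalIntegrable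
            apply Continuous.continuousOn
            apply continuous_parametric_intervalIntegral_of_continuous'
            exact (continuous_fst.pow 3).mul (hFecont.comp (continuous_snd.prodMk continuous_fst))
      _ = (∫ x in xmin..xmax, x ^ 3 * ψ t0 x) + ∫ τ in t0..s, h τ := by rw [hswap]
  -- derivative of the primitive
  have hprim : HasDerivWithinAt
      (fun s => (∫ x in xmin..xmax, x ^ 3 * ψ t0 x) + ∫ τ in t0..s, h τ)
      (h t) (Set.Icc t0 t1) t := by
    have : HasDerivAt (fun s => ∫ τ in t0..s, h τ) (h t) t := by
      apply intervalIntegral.integral_hasDerivAt_right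
        (hhcont.intervalIntegrable t0 t)
        (hhcont.stronglyMeasurable.stronglyMeasurableAtFilter)
        hhcont.continuousAt
    exact (this.hasDerivWithinAt).const_add _
  have hy : HasDerivWithinAt (fun s => ∫ x in xmin..xmax, x ^ 3 * ψ s x)
      (h t) (Set.Icc t0 t1) t := by
    apply hprim.congr
    · intro s hs; exact (hkey s hs).symm ▸ rfl
    · exact (hkey t htmem)
  -- compute h t via integration by parts
  have hparts : h t = (3 * ∫ x in xmin..xmax, x ^ 2 * ψ t x) + xmin ^ 3 * u t := by
    have hFtc : ∫ x in xmin..xmax, (3 * x ^ 2 * ψ t x + x ^ 3 * Ge t x)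
        = xmax ^ 3 * ψ t xmax - xmin ^ 3 * ψ t xmin := by
      apply integral_eq_sub_of_hasDeriv_right_of_le hx.le
      · exact (continuous_id.pow 3).continuousOn.mul (hcont_x t htmem)
      · intro x hxm
        have hxS : x ∈ Set.Icc xmin xmax := ⟨hxm.1.le, hxm.2.le⟩
        have h1 : HasDerivWithinAt (fun ξ : ℝ => ξ ^ 3) (3 * x ^ 2) (Set.Ioi x) x := by
          simpa using ((hasDerivAt_pow 3 x).hasDerivWithinAt (s := Set.Ioi x))
        have h2 : HasDerivWithinAt (fun ξ => ψ t ξ) (Ge t x) (Set.Ioi x) x := by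
          have := hslice_x t htmem x hxS
          rw [← hGeS t htmem x hxS] at this
          apply this.mono_of_mem_nhdsWithin
          exact Filter.mem_of_superset (Ioc_mem_nhdsGT_of_mem ⟨le_refl x, hxm.2⟩)
            (fun z hz => ⟨hxm.1.le.trans hz.1.le, hz.2⟩)
        exact h1.mul h2
      · apply ContinuousOn.intervalIntegrable
        have : ContinuousOn (fun x : ℝ => x ^ 3 * Ge t x) (Set.uIcc xmin xmax) := by
          exact ((continuous_id.pow 3).mul
            (hGecont.comp (continuous_const.prodMk continuous_id))).continuousOn
        refine ContinuousOn.add ?_ this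
        rw [Set.uIcc_of_le hx.le]
        exact (continuous_const.continuousOn.mul (continuous_id.pow 2).continuousOn).mul
          (hcont_x t htmem)
    have hsplit : ∫ x in xmin..xmax, (3 * x ^ 2 * ψ t x + x ^ 3 * Ge t x)
        = (∫ x in xmin..xmax, 3 * x ^ 2 * ψ t x) + ∫ x in xmin..xmax, x ^ 3 * Ge t x := by
      apply intervalIntegral.integral_add
      · apply ContinuousOn.intervalIntegrable
        rw [Set.uIcc_of_le hx.le]
        exact (continuous_const.continuousOn.mul (continuous_id.pow 2).continuousOn).mul
          (hcont_x t htmem)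
      · exact ((continuous_id.pow 3).mul
          (hGecont.comp (continuous_const.prodMk continuous_id))).intervalIntegrable _ _
    have hht : h t = - ∫ x in xmin..xmax, x ^ 3 * Ge t x := by
      rw [hh, ← intervalIntegral.integral_neg]
      apply intervalIntegral.integral_congr
      intro x hxm
      rw [Set.uIcc_of_le hx.le] at hxm
      show x ^ 3 * Fe t x = -(x ^ 3 * Ge t x)
      rw [hPDE' t htmem x hxm]
      ring
    have h3 : (∫ x in xmin..xmax, 3 * x ^ 2 * ψ t x) = 3 * ∫ x in xmin..xmax, x ^ 2 * ψ t x := by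
      simp_rw [mul_assoc]
      exact intervalIntegral.integral_const_mul 3 _
    rw [hbmax t htmem, hbmin t htmem] at hFtc
    rw [hht]
    have : ∫ x in xmin..xmax, x ^ 3 * Ge t x
        = - xmin ^ 3 * u t - 3 * ∫ x in xmin..xmax, x ^ 2 * ψ t x := by
      have := hsplit ▸ hFtc
      rw [h3] at this
      linarith
    rw [this]; ring
  rw [← hparts]
  exact hy
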